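/- Every k-coherent property definable in TeamLTL(∼) is definable in ∀^k HyperLTL: for every k-coherent TeamLTL(∼)-formula φ there exists a ∀^k HyperLTL sentence Ψ (namely, either ∀π.⊥ or ∀π₁…∀πₖ.φ^{{π₁,…,πₖ}}) such that for every nonempty team (T,i): (T,i) ⊨ φ if and only if ∅,i ⊨_T Ψ. -/

import Mathlib

set_option maxHeartbeats 1000000

universe u

/-- A trace over the set `α` of atomic propositions: an infinite sequence of
sets of propositions. -/
abbrev Trace (α : Type u) := ℕ → Set α

/-- LTL formulae in negation normal form. -/
inductive LTLForm (α : Type u) : Type u where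
  | pos : α → LTLForm α
  | neg : α → LTLForm α
  | lor : LTLForm α → LTLForm α → LTLForm α
  | land : LTLForm α → LTLForm α → LTLForm α
  | next : LTLForm α → LTLForm α
  | luntil : LTLForm α → LTLForm α → LTLForm α
  | wuntil : LTLForm α → LTLForm α → LTLForm α

namespace LTLForm
variable {α : Type u}

/-- Standard single-trace LTL semantics. -/
def sat (t : Trace α) : ℕ → LTLForm α → Prop
  | i, pos p => p ∈ t i
  | i, neg p => p ∉ t i
  | i, lor φ ψ => sat t i φ ∨ sat t i ψ
  | i, land φ ψ => sat t i φ ∧ sat t i ψ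
  | i, next φ => sat t (i+1) φ
  | i, luntil φ ψ => ∃ k, i ≤ k ∧ sat t k ψ ∧ ∀ m, i ≤ m → m < k → sat t m φ
  | i, wuntil φ ψ => ∀ k, i ≤ k → sat t k φ ∨ ∃ m, i ≤ m ∧ m ≤ k ∧ sat t m ψ

/-- Size of an LTL formula. -/
def size : LTLForm α → ℕ
  | pos _ => 1
  | neg _ => 1
  | lor φ ψ => φ.size + ψ.size + 1
  | land φ ψ => φ.size + ψ.size + 1
  | next φ => φ.size + 1
  | luntil φ ψ => φ.size + ψ.size + 1
  | wuntil φ ψ => φ.size + ψ.size + 1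

end LTLForm

/-- Extensions of `TeamLTL` by atoms and connectives:
Boolean disjunction `⩔`, Boolean negation `∼`, inclusion atoms `⊆`,
the universal subteam quantifier `A`, the singleton subteam quantifier `A¹`
and the non-emptiness atom `∼⊥`. -/
inductive TExt : Type where
  | bdis | bneg | incl | asub | asub1 | nebot
deriving DecidableEq

/-- Formulae of TeamLTL together with all the extensions considered in the paper
(fragments are carved out via `TeamForm.exts`). -/
inductive TeamForm (α : Type u) : Type u where
  | pos : α → TeamForm α
  | neg : α → TeamForm α
  | lor : TeamForm α → TeamForm α → TeamForm α
  | land : TeamForm α → TeamForm α → TeamForm α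
  | next : TeamForm α → TeamForm α
  | luntil : TeamForm α → TeamForm α → TeamForm α
  | wuntil : TeamForm α → TeamForm α → TeamForm α
  | bdis : TeamForm α → TeamForm α → TeamForm α
  | bneg : TeamForm α → TeamForm α
  | incl : List (LTLForm α × LTLForm α) → TeamForm α
  | asub : TeamForm α → TeamForm α
  | asub1 : TeamForm α → TeamForm α
  | nebot : TeamForm α

namespace TeamForm
variable {α : Type u}

/-- Synchronous team semantics for (extended) TeamLTL. -/
def sat : Set (Trace α) → ℕ → TeamForm α → Prop
  | T, i, pos p => ∀ t ∈ T, p ∈ t i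
  | T, i, neg p => ∀ t ∈ T, p ∉ t i
  | T, i, lor φ ψ => ∃ T₁ T₂, T₁ ∪ T₂ = T ∧ sat T₁ i φ ∧ sat T₂ i ψ
  | T, i, land φ ψ => sat T i φ ∧ sat T i ψ
  | T, i, next φ => sat T (i+1) φ
  | T, i, luntil φ ψ => ∃ k, i ≤ k ∧ sat T k ψ ∧ ∀ m, i ≤ m → m < k → sat T m φ
  | T, i, wuntil φ ψ => ∀ k, i ≤ k → sat T k φ ∨ ∃ m, i ≤ m ∧ m ≤ k ∧ sat T m ψ
  | T, i, bdis φ ψ => sat T i φ ∨ sat T i ψ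
  | T, i, bneg φ => ¬ sat T i φ
  | T, i, incl ps => ∀ t ∈ T, ∃ t' ∈ T, ∀ p ∈ ps, (LTLForm.sat t i p.1 ↔ LTLForm.sat t' i p.2)
  | T, i, asub φ => ∀ S, S ⊆ T → sat S i φ
  | T, i, asub1 φ => ∀ t ∈ T, sat {t} i φ
  | T, _, nebot => T.Nonempty

/-- The collection of extensions (atoms/connectives beyond core TeamLTL)
occurring in a formula. -/
def exts : TeamForm α → Set TExt
  | pos _ => ∅
  | neg _ => ∅
  | lor φ ψ => exts φ ∪ exts ψ
  | land φ ψ => exts φ ∪ exts ψ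
  | next φ => exts φ
  | luntil φ ψ => exts φ ∪ exts ψ
  | wuntil φ ψ => exts φ ∪ exts ψ
  | bdis φ ψ => insert TExt.bdis (exts φ ∪ exts ψ)
  | bneg φ => insert TExt.bneg (exts φ)
  | incl _ => {TExt.incl}
  | asub φ => insert TExt.asub (exts φ)
  | asub1 φ => insert TExt.asub1 (exts φ)
  | nebot => {TExt.nebot}

/-- Size of an (extended) TeamLTL formula. -/
def size : TeamForm α → ℕ
  | pos _ => 1
  | neg _ => 1
  | lor φ ψ => φ.size + ψ.size + 1
  | land φ ψ => φ.size + ψ.size + 1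
  | next φ => φ.size + 1
  | luntil φ ψ => φ.size + ψ.size + 1
  | wuntil φ ψ => φ.size + ψ.size + 1
  | bdis φ ψ => φ.size + ψ.size + 1
  | bneg φ => φ.size + 1
  | incl ps => (ps.map (fun p => p.1.size + p.2.size)).sum + 1
  | asub φ => φ.size + 1
  | asub1 φ => φ.size + 1
  | nebot => 1

end TeamForm

universe v

/-- Quantifier-free formulae of HyperLTL / HyperQPTL(⁺) over atomic
propositions `α` and trace variables `V`, in negation normal form. -/
inductive QF (α : Type u) (V : Type v) : Type (max u v) where
  | pos : α → V → QF α V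
  | neg : α → V → QF α V
  | lor : QF α V → QF α V → QF α V
  | land : QF α V → QF α V → QF α V
  | next : QF α V → QF α V
  | luntil : QF α V → QF α V → QF α V
  | wuntil : QF α V → QF α V → QF α V

namespace QF
variable {α : Type u} {V : Type v}

/-- Semantics of quantifier-free hyperlogic formulae with respect to a trace
assignment `asgn` and a time point `i` (time advances uniformly on all
traces). -/
def sat (asgn : V → Trace α) : ℕ → QF α V → Prop
  | i, pos p π => p ∈ asgn π i
  | i, neg p π => p ∉ asgn π i
  | i, lor φ ψ => sat asgn i φ ∨ sat asgn i ψ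
  | i, land φ ψ => sat asgn i φ ∧ sat asgn i ψ
  | i, next φ => sat asgn (i+1) φ
  | i, luntil φ ψ => ∃ k, i ≤ k ∧ sat asgn k ψ ∧ ∀ m, i ≤ m → m < k → sat asgn m φ
  | i, wuntil φ ψ => ∀ k, i ≤ k → sat asgn k φ ∨ ∃ m, i ≤ m ∧ m ≤ k ∧ sat asgn m ψ

/-- Size of a quantifier-free formula. -/
def size : QF α V → ℕ
  | pos _ _ => 1
  | neg _ _ => 1
  | lor φ ψ => φ.size + ψ.size + 1
  | land φ ψ => φ.size + ψ.size + 1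
  | next φ => φ.size + 1
  | luntil φ ψ => φ.size + ψ.size + 1
  | wuntil φ ψ => φ.size + ψ.size + 1

/-- Negation of a quantifier-free formula, in negation normal form. -/
def dual : QF α V → QF α V
  | pos p π => neg p π
  | neg p π => pos p π
  | lor φ ψ => land (dual φ) (dual ψ)
  | land φ ψ => lor (dual φ) (dual ψ)
  | next φ => next (dual φ)
  | luntil φ ψ => wuntil (dual ψ) (land (dual φ) (dual ψ))
  | wuntil φ ψ => luntil (dual ψ) (land (dual φ) (dual ψ))

end QF

/-- Formulae of HyperQPTL⁺: a quantifier prefix consisting of trace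
quantifiers (`exTr`/`allTr`), uniform propositional quantifiers
(`exU`/`allU`) and non-uniform propositional quantifiers (`exN`/`allN`),
followed by a quantifier-free formula.  HyperQPTL is the fragment without
`exN`/`allN`; HyperLTL is the fragment with only trace quantifiers. -/
inductive HQ (α : Type u) (V : Type v) : Type (max u v) where
  | qf : QF α V → HQ α V
  | exTr : V → HQ α V → HQ α V
  | allTr : V → HQ α V → HQ α V
  | exU : α → HQ α V → HQ α V
  | allU : α → HQ α V → HQ α V
  | exN : α → HQ α V → HQ α V
  | allN : α → HQ α V → HQ α V

namespace HQ
variable {α : Type u} {V : Type v}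

/-- Reinterpretation of the proposition `q` along a trace according to the
`q`-sequence `s`. -/
def reint (q : α) (s : ℕ → Prop) (t : Trace α) : Trace α :=
  fun j => {a | (a = q ∧ s j) ∨ (a ≠ q ∧ a ∈ t j)}

/-- Projection of a trace to the propositions other than `q`. -/
def proj (q : α) (t : Trace α) : Trace α :=
  fun j => {a | a ≠ q ∧ a ∈ t j}

/-- Semantics of HyperQPTL⁺ over a set `T` of traces, a trace assignment
`asgn` and a time point `i`. -/
def sat [DecidableEq V] (T : Set (Trace α)) (asgn : V → Trace α) (i : ℕ) :
    HQ α V → Prop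
  | qf ψ => QF.sat asgn i ψ
  | exTr π φ => ∃ t ∈ T, sat T (Function.update asgn π t) i φ
  | allTr π φ => ∀ t ∈ T, sat T (Function.update asgn π t) i φ
  | exU q φ => ∃ s : ℕ → Prop,
      sat ((reint q s) '' T) (fun π => reint q s (asgn π)) i φ
  | allU q φ => ∀ s : ℕ → Prop,
      sat ((reint q s) '' T) (fun π => reint q s (asgn π)) i φ
  | exN q φ => ∃ (T' : Set (Trace α)) (asgn' : V → Trace α),
      (proj q '' T = proj q '' T') ∧ (∀ π, proj q (asgn π) = proj q (asgn' π)) ∧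
      (∀ π, asgn' π ∈ T') ∧ sat T' asgn' i φ
  | allN q φ => ∀ (T' : Set (Trace α)) (asgn' : V → Trace α),
      (proj q '' T = proj q '' T') → (∀ π, proj q (asgn π) = proj q (asgn' π)) →
      (∀ π, asgn' π ∈ T') → sat T' asgn' i φ

/-- A sentence is satisfied by a set of traces at time `i` if it holds under
every (equivalently, under some) trace assignment. -/
def sentSat [DecidableEq V] (T : Set (Trace α)) (i : ℕ) (φ : HQ α V) : Prop :=
  ∀ asgn : V → Trace α, sat T asgn i φ

/-- Size of a HyperQPTL⁺ formula. -/
def size : HQ α V → ℕ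
  | qf ψ => ψ.size + 1
  | exTr _ φ => φ.size + 1
  | allTr _ φ => φ.size + 1
  | exU _ φ => φ.size + 1
  | allU _ φ => φ.size + 1
  | exN _ φ => φ.size + 1
  | allN _ φ => φ.size + 1

end HQ

/-- Lifting a trace over `α` to a trace over `α ⊕ ℕ` (the original
propositions, together with countably many fresh propositions that never
hold). -/
def liftTrace {α : Type u} (t : Trace α) : Trace (α ⊕ ℕ) :=
  fun j => Sum.inl '' t j

/-- Lifting a team over `α` to a team over `α ⊕ ℕ`. -/
def liftTeam {α : Type u} (T : Set (Trace α)) : Set (Trace (α ⊕ ℕ)) :=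
  liftTrace '' T

namespace PhiTr
variable {α : Type u} {V : Type v}

/-- A tautological quantifier-free formula `⊤ := p_π ∨ ¬p_π`
(`d` and `v` are default proposition/variable symbols). -/
def topQ (d : α) (v : V) : QF α V := .lor (.pos d v) (.neg d v)

/-- An unsatisfiable quantifier-free formula `⊥ := p_π ∧ ¬p_π`. -/
def botQ (d : α) (v : V) : QF α V := .land (.pos d v) (.neg d v)

/-- Big conjunction of a list of quantifier-free formulae. -/
def bigAndQ (d : α) (v : V) : List (QF α V) → QF α V
  | [] => topQ d v
  | [φ] => φ
  | φ :: φs => .land φ (bigAndQ d v φs)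

/-- Big disjunction of a list of quantifier-free formulae. -/
def bigOrQ (d : α) (v : V) : List (QF α V) → QF α V
  | [] => botQ d v
  | [φ] => φ
  | φ :: φs => .lor φ (bigOrQ d v φs)

/-- The translation `φ ↦ φ^Φ` from `TeamLTL(∼)` to quantifier-free HyperLTL:
`p^Φ = ⋀_{π∈Φ} p_π`, `(¬p)^Φ = ⋀_{π∈Φ} ¬p_π`, `(∼φ)^Φ = nnf of ¬(φ^Φ)`,
`(Xφ)^Φ = X(φ^Φ)`, `(φ∧ψ)^Φ = φ^Φ ∧ ψ^Φ`,
`(φ∨ψ)^Φ = ⋁_{Φ₀∪Φ₁=Φ} (φ^{Φ₀} ∧ ψ^{Φ₁})`, `(φUψ)^Φ = φ^Φ U ψ^Φ`,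
`(φWψ)^Φ = φ^Φ W ψ^Φ`.  (Clauses for connectives outside of `TeamLTL(∼)`
are irrelevant.) -/
noncomputable def trPhi [DecidableEq V] (d : α) (v : V) : TeamForm α → Finset V → QF α V
  | .pos p, Φ => bigAndQ d v (Φ.toList.map fun π => .pos p π)
  | .neg p, Φ => bigAndQ d v (Φ.toList.map fun π => .neg p π)
  | .bneg φ, Φ => (trPhi d v φ Φ).dual
  | .next φ, Φ => .next (trPhi d v φ Φ)
  | .land φ ψ, Φ => .land (trPhi d v φ Φ) (trPhi d v ψ Φ)
  | .lor φ ψ, Φ => bigOrQ d v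
      ((((Φ.powerset ×ˢ Φ.powerset).filter (fun P => P.1 ∪ P.2 = Φ)).toList).map
        (fun P => .land (trPhi d v φ P.1) (trPhi d v ψ P.2)))
  | .luntil φ ψ, Φ => .luntil (trPhi d v φ Φ) (trPhi d v ψ Φ)
  | .wuntil φ ψ, Φ => .wuntil (trPhi d v φ Φ) (trPhi d v ψ Φ)
  | _, _ => topQ d v

/-- A TeamLTL formula is downward closed if its satisfaction is inherited by
all subteams. -/
def DownwardClosed (φ : TeamForm α) : Prop :=
  ∀ (T S : Set (Trace α)) (i : ℕ), S ⊆ T → TeamForm.sat T i φ → TeamForm.sat S i φ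

/-- A TeamLTL formula is `k`-coherent if its satisfaction by a team is
equivalent to its satisfaction by all subteams of size at most `k`. -/
def KCoherent (k : ℕ) (φ : TeamForm α) : Prop :=
  ∀ (T : Set (Trace α)) (i : ℕ),
    TeamForm.sat T i φ ↔ ∀ S ⊆ T, S.Finite → S.ncard ≤ k → TeamForm.sat S i φ

end PhiTr

namespace Stmt7Aux
open PhiTr
variable {α : Type u} {V : Type v}

lemma until_dual (P Q : ℕ → Prop) (i : ℕ) :
    (∀ k, i ≤ k → ¬ P k ∨ ∃ m, i ≤ m ∧ m ≤ k ∧ (¬ Q m ∧ ¬ P m)) ↔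
    ¬ (∃ k, i ≤ k ∧ P k ∧ ∀ m, i ≤ m → m < k → Q m) := by
  classical
  constructor
  · rintro h ⟨k, hik, hPk, hQ⟩
    rcases h k hik with h1 | ⟨m, him, hmk, hQm, hPm⟩
    · exact h1 hPk
    · rcases lt_or_eq_of_le hmk with h2 | h2
      · exact hQm (hQ m him h2)
      · exact hPm (h2 ▸ hPk)
  · intro h k hik
    by_cases hPk : P k
    · right
      have hne : ∃ j, i ≤ j ∧ P j := ⟨k, hik, hPk⟩
      have hjspec := Nat.find_spec hne
      have hjk : Nat.find hne ≤ k := Nat.find_min' hne ⟨hik, hPk⟩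
      have : ¬ ∀ m, i ≤ m → m < Nat.find hne → Q m :=
        fun hq => h ⟨Nat.find hne, hjspec.1, hjspec.2, hq⟩
      push_neg at this
      obtain ⟨m, him, hmj, hQm⟩ := this
      refine ⟨m, him, le_trans (le_of_lt hmj) hjk, hQm, ?_⟩
      intro hPm
      exact Nat.find_min hne hmj ⟨him, hPm⟩
    · exact Or.inl hPk

lemma wuntil_dual (P Q : ℕ → Prop) (i : ℕ) :
    (∃ k, i ≤ k ∧ (¬ Q k ∧ ¬ P k) ∧ ∀ m, i ≤ m → m < k → ¬ P m) ↔
    ¬ (∀ k, i ≤ k → Q k ∨ ∃ m, i ≤ m ∧ m ≤ k ∧ P m) := by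
  classical
  constructor
  · rintro ⟨k, hik, ⟨hQ, hP⟩, hPs⟩ hall
    rcases hall k hik with h1 | ⟨m, him, hmk, hPm⟩
    · exact hQ h1
    · rcases lt_or_eq_of_le hmk with h2 | h2
      · exact hPs m him h2 hPm
      · exact hP (h2 ▸ hPm)
  · intro h
    push_neg at h
    obtain ⟨k, hik, hQk, hP⟩ := h
    exact ⟨k, hik, ⟨hQk, hP k hik le_rfl⟩, fun m him hmk => hP m him (le_of_lt hmk)⟩

lemma dual_sat (asgn : V → Trace α) :
    ∀ (ψ : QF α V) (i : ℕ), QF.sat asgn i ψ.dual ↔ ¬ QF.sat asgn i ψ := by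
  classical
  intro ψ
  induction ψ with
  | pos p π => intro i; simp [QF.dual, QF.sat]
  | neg p π => intro i; simp [QF.dual, QF.sat]
  | lor φ ψ ihφ ihψ => intro i; simp [QF.dual, QF.sat, ihφ, ihψ, not_or]
  | land φ ψ ihφ ihψ =>
      intro i
      simp only [QF.dual, QF.sat, ihφ, ihψ]
      tauto
  | next φ ih => intro i; simp [QF.dual, QF.sat, ih]
  | luntil φ ψ ihφ ihψ =>
      intro i
      simp only [QF.dual, QF.sat, ihφ, ihψ]
      exact until_dual (fun k => QF.sat asgn k ψ) (fun k => QF.sat asgn k φ) i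
  | wuntil φ ψ ihφ ihψ =>
      intro i
      simp only [QF.dual, QF.sat, ihφ, ihψ]
      exact wuntil_dual (fun k => QF.sat asgn k ψ) (fun k => QF.sat asgn k φ) i

end Stmt7Aux
namespace Stmt7Aux2
open PhiTr Stmt7Aux
variable {α : Type u} {V : Type v}

lemma sat_topQ (d : α) (v : V) (asgn : V → Trace α) (i : ℕ) :
    QF.sat asgn i (topQ d v) := by
  simp only [topQ, QF.sat]
  exact Classical.em _

lemma sat_botQ (d : α) (v : V) (asgn : V → Trace α) (i : ℕ) :
    ¬ QF.sat asgn i (botQ d v) := by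
  simp [botQ, QF.sat]

lemma bigAndQ_sat (d : α) (v : V) (asgn : V → Trace α) (i : ℕ) :
    ∀ L : List (QF α V),
      QF.sat asgn i (bigAndQ d v L) ↔ ∀ χ ∈ L, QF.sat asgn i χ := by
  intro L
  induction L with
  | nil => simpa [bigAndQ] using sat_topQ d v asgn i
  | cons χ L ih =>
    cases L with
    | nil => simp [bigAndQ]
    | cons χ' L' =>
      rw [show bigAndQ d v (χ :: χ' :: L') = .land χ (bigAndQ d v (χ' :: L')) from rfl]
      simp only [QF.sat, ih, List.mem_cons]
      constructor
      · rintro ⟨h1, h2⟩ x (rfl | hx)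
        · exact h1
        · exact h2 x (by simpa using hx)
      · intro h
        exact ⟨h χ (Or.inl rfl), fun x hx => h x (Or.inr (by simpa using hx))⟩

lemma bigOrQ_sat (d : α) (v : V) (asgn : V → Trace α) (i : ℕ) :
    ∀ L : List (QF α V),
      QF.sat asgn i (bigOrQ d v L) ↔ ∃ χ ∈ L, QF.sat asgn i χ := by
  intro L
  induction L with
  | nil => simpa [bigOrQ] using sat_botQ d v asgn i
  | cons χ L ih =>
    cases L with
    | nil => simp [bigOrQ]
    | cons χ' L' =>
      rw [show bigOrQ d v (χ :: χ' :: L') = .lor χ (bigOrQ d v (χ' :: L')) from rfl]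
      simp only [QF.sat, ih, List.mem_cons]
      constructor
      · rintro (h1 | ⟨x, hx, hs⟩)
        · exact ⟨χ, Or.inl rfl, h1⟩
        · exact ⟨x, Or.inr hx, hs⟩
      · rintro ⟨x, (rfl | hx), hs⟩
        · exact Or.inl hs
        · exact Or.inr ⟨x, hx, hs⟩

end Stmt7Aux2
namespace Stmt7Aux3
open PhiTr Stmt7Aux Stmt7Aux2
variable {α : Type u} {V : Type v}

lemma trPhi_correct [DecidableEq V] (d : α) (v : V) :
    ∀ (φ : TeamForm α), φ.exts ⊆ {TExt.bneg} →
    ∀ (Φ : Finset V) (asgn : V → Trace α) (i : ℕ),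
      QF.sat asgn i (trPhi d v φ Φ) ↔ TeamForm.sat (asgn '' ↑Φ) i φ := by
  classical
  intro φ
  induction φ with
  | pos p =>
    intro _ Φ asgn i
    simp only [trPhi, TeamForm.sat, bigAndQ_sat, List.mem_map, Finset.mem_toList,
      Set.mem_image]
    constructor
    · rintro h t ⟨π, hπ, rfl⟩
      exact h _ ⟨π, hπ, rfl⟩
    · rintro h χ ⟨π, hπ, rfl⟩
      exact h _ ⟨π, hπ, rfl⟩
  | neg p =>
    intro _ Φ asgn i
    simp only [trPhi, TeamForm.sat, bigAndQ_sat, List.mem_map, Finset.mem_toList,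
      Set.mem_image]
    constructor
    · rintro h t ⟨π, hπ, rfl⟩
      exact h _ ⟨π, hπ, rfl⟩
    · rintro h χ ⟨π, hπ, rfl⟩
      exact h _ ⟨π, hπ, rfl⟩
  | lor φ ψ ihφ ihψ =>
    intro hext Φ asgn i
    simp only [TeamForm.exts, Set.union_subset_iff] at hext
    have h1 := hext.1
    have h2 := hext.2
    simp only [trPhi, TeamForm.sat, bigOrQ_sat, List.mem_map, Finset.mem_toList,
      Finset.mem_filter, Finset.mem_product, Finset.mem_powerset]
    constructor
    · rintro ⟨χ, ⟨⟨P0, P1⟩, ⟨⟨hP0, hP1⟩, hun⟩, rfl⟩, hs⟩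
      obtain ⟨hs1, hs2⟩ := hs
      refine ⟨asgn '' ↑P0, asgn '' ↑P1, ?_, (ihφ h1 P0 asgn i).mp hs1,
        (ihψ h2 P1 asgn i).mp hs2⟩
      rw [← Set.image_union, ← Finset.coe_union, hun]
    · rintro ⟨T1, T2, hun, hs1, hs2⟩
      set P0 := Φ.filter (fun π => asgn π ∈ T1) with hP0def
      set P1 := Φ.filter (fun π => asgn π ∈ T2) with hP1def
      have himg1 : asgn '' ↑P0 = T1 := by
        ext t
        simp only [hP0def, Set.mem_image, Finset.coe_filter, Set.mem_setOf_eq]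
        constructor
        · rintro ⟨π, ⟨hπ, ht⟩, rfl⟩; exact ht
        · intro ht
          have h' : t ∈ asgn '' ↑Φ := by
            rw [← hun]; exact Set.mem_union_left _ ht
          obtain ⟨π, hπ, rfl⟩ := h'
          exact ⟨π, ⟨hπ, ht⟩, rfl⟩
      have himg2 : asgn '' ↑P1 = T2 := by
        ext t
        simp only [hP1def, Set.mem_image, Finset.coe_filter, Set.mem_setOf_eq]
        constructor
        · rintro ⟨π, ⟨hπ, ht⟩, rfl⟩; exact ht
        · intro ht
          have h' : t ∈ asgn '' ↑Φ := by
            rw [← hun]; exact Set.mem_union_right _ ht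
          obtain ⟨π, hπ, rfl⟩ := h'
          exact ⟨π, ⟨hπ, ht⟩, rfl⟩
      have hcup : P0 ∪ P1 = Φ := by
        apply Finset.Subset.antisymm
        · exact Finset.union_subset (Finset.filter_subset _ _) (Finset.filter_subset _ _)
        · intro π hπ
          have h' : asgn π ∈ asgn '' ↑Φ := Set.mem_image_of_mem asgn (Finset.mem_coe.mpr hπ)
          rw [← hun] at h'
          rcases h' with h | h
          · exact Finset.mem_union_left _ (Finset.mem_filter.mpr ⟨hπ, h⟩)
          · exact Finset.mem_union_right _ (Finset.mem_filter.mpr ⟨hπ, h⟩)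
      refine ⟨.land (trPhi d v φ P0) (trPhi d v ψ P1),
        ⟨⟨P0, P1⟩, ⟨⟨Finset.filter_subset _ _, Finset.filter_subset _ _⟩, hcup⟩, rfl⟩, ?_⟩
      exact ⟨(ihφ h1 P0 asgn i).mpr (himg1 ▸ hs1), (ihψ h2 P1 asgn i).mpr (himg2 ▸ hs2)⟩
  | land φ ψ ihφ ihψ =>
    intro hext Φ asgn i
    simp only [TeamForm.exts, Set.union_subset_iff] at hext
    simp only [trPhi, QF.sat, TeamForm.sat, ihφ hext.1, ihψ hext.2]
  | next φ ih =>
    intro hext Φ asgn i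
    simp only [TeamForm.exts] at hext
    simp only [trPhi, QF.sat, TeamForm.sat, ih hext]
  | luntil φ ψ ihφ ihψ =>
    intro hext Φ asgn i
    simp only [TeamForm.exts, Set.union_subset_iff] at hext
    simp only [trPhi, QF.sat, TeamForm.sat, ihφ hext.1, ihψ hext.2]
  | wuntil φ ψ ihφ ihψ =>
    intro hext Φ asgn i
    simp only [TeamForm.exts, Set.union_subset_iff] at hext
    simp only [trPhi, QF.sat, TeamForm.sat, ihφ hext.1, ihψ hext.2]
  | bneg φ ih =>
    intro hext Φ asgn i
    have h1 : φ.exts ⊆ {TExt.bneg} :=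
      subset_trans (Set.subset_insert _ _) hext
    simp only [trPhi, TeamForm.sat]
    rw [dual_sat, ih h1]
  | bdis φ ψ _ _ =>
    intro hext _ _ _
    have := hext (Set.mem_insert TExt.bdis _)
    simp at this
  | incl ps =>
    intro hext _ _ _
    have := hext (show TExt.incl ∈ TeamForm.exts (TeamForm.incl ps) from rfl)
    simp at this
  | asub φ _ =>
    intro hext _ _ _
    have := hext (Set.mem_insert TExt.asub _)
    simp at this
  | asub1 φ _ =>
    intro hext _ _ _
    have := hext (Set.mem_insert TExt.asub1 _)
    simp at this
  | nebot =>
    intro hext _ _ _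
    have := hext (show TExt.nebot ∈ TeamForm.exts (TeamForm.nebot : TeamForm α) from rfl)
    simp at this

end Stmt7Aux3
namespace Stmt7Aux4
open PhiTr
variable {α : Type u} {V : Type v}

lemma sat_empty_const : ∀ (φ : TeamForm α) (i j : ℕ),
    TeamForm.sat ∅ i φ ↔ TeamForm.sat ∅ j φ := by
  intro φ
  induction φ with
  | pos p => intro i j; simp [TeamForm.sat]
  | neg p => intro i j; simp [TeamForm.sat]
  | lor φ ψ ihφ ihψ =>
    have key : ∀ i, TeamForm.sat (∅ : Set (Trace α)) i (.lor φ ψ) ↔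
        (TeamForm.sat ∅ i φ ∧ TeamForm.sat ∅ i ψ) := by
      intro i
      constructor
      · rintro ⟨T1, T2, hun, h1, h2⟩
        have e1 : T1 = ∅ := Set.subset_empty_iff.mp (hun ▸ Set.subset_union_left)
        have e2 : T2 = ∅ := Set.subset_empty_iff.mp (hun ▸ Set.subset_union_right)
        exact ⟨e1 ▸ h1, e2 ▸ h2⟩
      · rintro ⟨h1, h2⟩
        exact ⟨∅, ∅, by simp, h1, h2⟩
    intro i j
    rw [key i, key j, ihφ i j, ihψ i j]
  | land φ ψ ihφ ihψ =>
    intro i j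
    simp only [TeamForm.sat, ihφ i j, ihψ i j]
  | next φ ih => intro i j; simpa [TeamForm.sat] using ih (i+1) (j+1)
  | luntil φ ψ ihφ ihψ =>
    have key : ∀ i j, TeamForm.sat (∅ : Set (Trace α)) i (.luntil φ ψ) →
        TeamForm.sat ∅ j (.luntil φ ψ) := by
      rintro i j ⟨k, hik, hψ, _⟩
      exact ⟨j, le_rfl, (ihψ k j).mp hψ, fun m h1 h2 => absurd h2 (by omega)⟩
    intro i j
    exact ⟨key i j, key j i⟩
  | wuntil φ ψ ihφ ihψ =>
    have key : ∀ i j, TeamForm.sat (∅ : Set (Trace α)) i (.wuntil φ ψ) →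
        TeamForm.sat ∅ j (.wuntil φ ψ) := by
      intro i j h k hjk
      rcases h i le_rfl with h1 | ⟨m, _, _, h2⟩
      · exact Or.inl ((ihφ i k).mp h1)
      · exact Or.inr ⟨k, hjk, le_rfl, (ihψ m k).mp h2⟩
    intro i j
    exact ⟨key i j, key j i⟩
  | bdis φ ψ ihφ ihψ =>
    intro i j
    simp only [TeamForm.sat, ihφ i j, ihψ i j]
  | bneg φ ih =>
    intro i j
    simp only [TeamForm.sat, ih i j]
  | incl ps => intro i j; simp [TeamForm.sat]
  | asub φ ih =>
    have key : ∀ i, TeamForm.sat (∅ : Set (Trace α)) i (.asub φ) ↔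
        TeamForm.sat ∅ i φ := by
      intro i
      constructor
      · intro h; exact h ∅ (subset_refl _)
      · intro h S hS
        rw [Set.subset_empty_iff.mp hS]; exact h
    intro i j
    rw [key i, key j, ih i j]
  | asub1 φ _ => intro i j; simp [TeamForm.sat]
  | nebot => intro i j; exact Iff.rfl

lemma foldr_allTr_sat [DecidableEq V] (T : Set (Trace α)) (i : ℕ) (ψ : QF α V) :
    ∀ (L : List V) (asgn : V → Trace α),
      HQ.sat T asgn i (L.foldr (fun j acc => HQ.allTr j acc) (HQ.qf ψ)) ↔
      ∀ asgn' : V → Trace α, (∀ j ∈ L, asgn' j ∈ T) → (∀ j ∉ L, asgn' j = asgn j) →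
        QF.sat asgn' i ψ := by
  intro L
  induction L with
  | nil =>
    intro asgn
    simp only [List.foldr_nil, HQ.sat, List.not_mem_nil]
    constructor
    · intro h asgn' _ h2
      have : asgn' = asgn := funext fun j => h2 j (by simp)
      rw [this]; exact h
    · intro h
      exact h asgn (by simp) (fun _ _ => rfl)
  | cons j L ih =>
    intro asgn
    simp only [List.foldr_cons, HQ.sat]
    constructor
    · intro h asgn' h1 h2
      have hjT : asgn' j ∈ T := h1 j List.mem_cons_self
      refine (ih (Function.update asgn j (asgn' j))).mp (h (asgn' j) hjT) asgn'
        (fun j' hj' => h1 j' (List.mem_cons_of_mem _ hj')) ?_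
      intro j' hj'
      by_cases hje : j' = j
      · subst hje; simp
      · rw [Function.update_of_ne hje]
        exact h2 j' (by simp [hj', hje])
    · intro h t ht
      refine (ih (Function.update asgn j t)).mpr ?_
      intro asgn' h1 h2
      refine h asgn' ?_ ?_
      · intro j' hj'
        rcases List.mem_cons.mp hj' with rfl | hj'
        · by_cases hjL : j' ∈ L
          · exact h1 j' hjL
          · have := h2 j' hjL
            rw [this, Function.update_self]; exact ht
        · exact h1 j' hj'
      · intro j' hj'
        have hj'L : j' ∉ L := fun hc => hj' (List.mem_cons_of_mem _ hc)
        have hje : j' ≠ j := fun hc => hj' (hc ▸ (List.mem_cons_self : j ∈ j :: L))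
        rw [h2 j' hj'L, Function.update_of_ne hje]

end Stmt7Aux4

namespace Stmt7
open PhiTr
open Stmt7Aux Stmt7Aux2 Stmt7Aux3 Stmt7Aux4
variable {α : Type u}

/-- The `∀^k` HyperLTL sentence `∀π₁…∀πₖ.ψ`. -/
def forallK {k : ℕ} (ψ : QF α (Fin k)) : HQ α (Fin k) :=
  (List.finRange k).foldr (fun j acc => HQ.allTr j acc) (HQ.qf ψ)

lemma forallK_sentSat {k : ℕ} (ψ : QF α (Fin k)) (T : Set (Trace α)) (i : ℕ) :
    HQ.sentSat T i (forallK ψ) ↔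
      ∀ f : Fin k → Trace α, (∀ j, f j ∈ T) → QF.sat f i ψ := by
  unfold HQ.sentSat forallK
  constructor
  · intro h f hf
    exact (foldr_allTr_sat T i ψ (List.finRange k) f).mp (h f) f
      (fun j _ => hf j) (fun j _ => rfl)
  · intro h asgn
    rw [foldr_allTr_sat]
    intro asgn' h1 _
    exact h asgn' (fun j => h1 j (List.mem_finRange j))

lemma exists_range_eq (k : ℕ) (S : Set (Trace α)) (hne : S.Nonempty) (hfin : S.Finite)
    (hcard : S.ncard ≤ k) : ∃ f : Fin k → Trace α, Set.range f = S := by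
  classical
  obtain ⟨t₀, ht₀⟩ := hne
  set l := hfin.toFinset.toList with hl
  have hmem : ∀ x, x ∈ l ↔ x ∈ S := by
    intro x; simp [hl, Set.Finite.mem_toFinset]
  have hlen : l.length = S.ncard := by
    rw [hl, Finset.length_toList, Set.ncard_eq_toFinset_card S hfin]
  refine ⟨fun j => l.getD j t₀, ?_⟩
  apply Set.Subset.antisymm
  · rintro x ⟨j, rfl⟩
    show l.getD (↑j) t₀ ∈ S
    by_cases hj : (j : ℕ) < l.length
    · rw [List.getD_eq_getElem l t₀ hj]
      exact (hmem _).mp (List.getElem_mem hj)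
    · rw [List.getD_eq_default l t₀ (le_of_not_gt hj)]
      exact ht₀
  · intro x hx
    obtain ⟨n, hn, hx'⟩ := List.mem_iff_getElem.mp ((hmem x).mpr hx)
    have hk : n < k := lt_of_lt_of_le hn (hlen ▸ hcard)
    refine ⟨⟨n, hk⟩, ?_⟩
    rw [← hx']
    exact List.getD_eq_getElem l t₀ (by simpa using hn)

/-- Every `k`-coherent property definable in `TeamLTL(∼)` is
also definable in `∀^k HyperLTL`: for every `k`-coherent
`TeamLTL(∼)`-formula `φ` there is a quantifier-free HyperLTL formula `ψ`
over the trace variables `π₁,…,πₖ` — namely either `⊥` or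
`φ^{{π₁,…,πₖ}}` — such that for every nonempty team `(T,i)`:
`(T,i) ⊨ φ` iff `∅,i ⊨_T ∀π₁…∀πₖ.ψ`. -/
theorem stmt_7 [Inhabited α] (k : ℕ) (hk : 0 < k) (φ : TeamForm α)
    (hφ : φ.exts ⊆ {TExt.bneg}) (hcoh : KCoherent k φ) :
    ∃ ψ : QF α (Fin k),
      (ψ = botQ default ⟨0, hk⟩ ∨
        ψ = trPhi default ⟨0, hk⟩ φ (Finset.univ : Finset (Fin k))) ∧
      ∀ (T : Set (Trace α)) (i : ℕ), T.Nonempty →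
        (TeamForm.sat T i φ ↔ HQ.sentSat T i (forallK ψ)) := by

  classical
  by_cases h0 : TeamForm.sat (∅ : Set (Trace α)) 0 φ
  · -- empty team satisfies φ: use the translation
    refine ⟨trPhi default ⟨0, hk⟩ φ Finset.univ, Or.inr rfl, ?_⟩
    intro T i hT
    rw [forallK_sentSat, hcoh T i]
    constructor
    · intro h f hf
      rw [trPhi_correct default ⟨0, hk⟩ φ hφ Finset.univ f i]
      have hrange : f '' ↑(Finset.univ : Finset (Fin k)) = Set.range f := by
        simp
      rw [hrange]
      refine h (Set.range f) (Set.range_subset_iff.mpr hf) (Set.finite_range f) ?_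
      have : Set.range f = ↑(Finset.image f Finset.univ) := by
        simp [Finset.coe_image]
      rw [this, Set.ncard_coe_finset]
      calc (Finset.image f Finset.univ).card ≤ (Finset.univ : Finset (Fin k)).card :=
            Finset.card_image_le
        _ = k := by simp
    · intro h S hS hfin hcard
      rcases Set.eq_empty_or_nonempty S with rfl | hne
      · exact (sat_empty_const φ i 0).mpr h0
      · obtain ⟨f, hf⟩ := exists_range_eq k S hne hfin hcard
        have hfT : ∀ j, f j ∈ T := fun j => hS (hf ▸ Set.mem_range_self j)
        have := h f hfT
        rw [trPhi_correct default ⟨0, hk⟩ φ hφ Finset.univ f i] at this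
        have hrange : f '' ↑(Finset.univ : Finset (Fin k)) = Set.range f := by simp
        rw [hrange, hf] at this
        exact this
  · -- empty team does not satisfy φ: φ is unsatisfiable, use ⊥
    refine ⟨botQ default ⟨0, hk⟩, Or.inl rfl, ?_⟩
    intro T i hT
    constructor
    · intro h
      exfalso
      apply h0
      rw [sat_empty_const φ 0 i]
      exact (hcoh T i).mp h ∅ (Set.empty_subset T) Set.finite_empty (by simp)
    · intro h
      exfalso
      obtain ⟨t₀, ht₀⟩ := hT
      exact sat_botQ default (⟨0, hk⟩ : Fin k) (fun _ => t₀) i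
        ((forallK_sentSat _ T i).mp h (fun _ => t₀) (fun _ => ht₀))


end Stmt7
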